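/- arXiv:1501.02736 — 2 statements merged into one kernel-verified Lean document; each statement's English description precedes it below -/
import Mathlib

section
/- Let q = p^l be a power of a prime p with l ≥ 1, and let Q be a Sylow p-subgroup of the symmetric group on q symbols. Then the cycle (1, 2, …, q) does not belong to the commutator subgroup of Q. -/
open Subgroup MulAction
open Fin.NatCast

private lemma finRotate_pow_apply (q n : ℕ) (x : Fin (q + 1)) :
    ((finRotate (q + 1)) ^ n) x = x + (n : Fin (q + 1)) := by
  induction n with
  | zero => simp
  | succ n ih =>
    rw [pow_succ', Equiv.Perm.mul_apply, ih, finRotate_succ_apply]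
    push_cast
    rw [add_assoc]

private lemma key {p : ℕ} (hp : p.Prime) :
    ∀ m : ℕ, 1 ≤ m → ∀ (β : Type) (_ : Finite β), Nat.card β = p ^ m →
    ∀ (Q : Sylow p (Equiv.Perm β)) (τ : Equiv.Perm β), τ ∈ Q →
    (∀ x y : β, ∃ n : ℕ, (τ ^ n) x = y) →
    τ ∉ ⁅(Q : Subgroup (Equiv.Perm β)), (Q : Subgroup (Equiv.Perm β))⁆ := by
  haveI : Fact p.Prime := ⟨hp⟩
  intro m
  induction m using Nat.strong_induction_on with
  | _ m ih =>
  intro hm β _ hcard Q τ hτ htrans hcomm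
  set P : Subgroup (Equiv.Perm β) := ↑Q with hP
  set τ' : ↥P := ⟨τ, hτ⟩ with hτ'def
  have hPgrp : IsPGroup p ↥P := Q.2
  -- τ' is in the commutator subgroup of ↥P
  have hmapc : Subgroup.map P.subtype ⁅(⊤ : Subgroup ↥P), (⊤ : Subgroup ↥P)⁆ = ⁅P, P⁆ := by
    rw [Subgroup.map_commutator, ← MonoidHom.range_eq_map, P.range_subtype]
  have hτtop : τ' ∈ ⁅(⊤ : Subgroup ↥P), (⊤ : Subgroup ↥P)⁆ := by
    rw [← hmapc] at hcomm
    obtain ⟨x, hx, hxe⟩ := hcomm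
    have : x = τ' := Subtype.ext hxe
    rwa [this] at hx
  -- nontriviality of β
  have hβ2 : 1 < Nat.card β := by
    rw [hcard]
    calc 1 < p := hp.one_lt
    _ ≤ p ^ m := Nat.le_self_pow (by omega) p
  have hτne : τ ≠ 1 := by
    intro h1
    haveI : Nontrivial β := Finite.one_lt_card_iff_nontrivial.mp hβ2
    obtain ⟨x, y, hxy⟩ := exists_pair_ne β
    obtain ⟨n, hn⟩ := htrans x y
    rw [h1, one_pow] at hn
    exact hxy hn
  obtain ⟨k, hk⟩ := hPgrp.exists_card_eq
  rcases eq_or_lt_of_le hm with h1 | h2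
  · -- base case : m = 1, P is abelian
    have hcardβ : Nat.card β = p := by rw [hcard, ← h1, pow_one]
    haveI : Fintype β := Fintype.ofFinite β
    haveI : DecidableEq β := Classical.decEq β
    have hdvd : Nat.card ↥P ∣ Nat.card (Equiv.Perm β) := Subgroup.card_subgroup_dvd_card P
    have hcardPerm : Nat.card (Equiv.Perm β) = Nat.factorial p := by
      rw [Nat.card_eq_fintype_card, Fintype.card_perm, ← hcardβ, Nat.card_eq_fintype_card]
    have hp2 : ¬ (p ^ 2 ∣ Nat.factorial p) := by
      intro hdv
      obtain ⟨p', hp'⟩ : ∃ p', p = p' + 1 := ⟨p - 1, by omega⟩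
      rw [hp', Nat.factorial_succ, pow_two] at hdv
      have : (p' + 1) ∣ Nat.factorial p' :=
        (Nat.mul_dvd_mul_iff_left (show 0 < p' + 1 by omega)).mp hdv
      have := (Nat.Prime.dvd_factorial (by rw [← hp']; exact hp)).mp this
      omega
    have hk1 : k ≤ 1 := by
      by_contra hk2
      exact hp2 (dvd_trans (dvd_trans (pow_dvd_pow p (by omega : 2 ≤ k))
        (by rw [← hk] : p ^ k ∣ Nat.card ↥P)) (hcardPerm ▸ hdvd))
    have hcyc : IsCyclic ↥P := by
      interval_cases k
      · haveI : Subsingleton ↥P :=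
          (Nat.card_eq_one_iff_unique.mp (by rw [hk, pow_zero])).1
        infer_instance
      · exact isCyclic_of_prime_card (by rw [hk, pow_one])
    letI : CommGroup ↥P := hcyc.commGroup
    have : ⁅(⊤ : Subgroup ↥P), (⊤ : Subgroup ↥P)⁆ ≤ ⊥ := by
      rw [Subgroup.commutator_le]
      intro g _ h _
      rw [Subgroup.mem_bot, commutatorElement_eq_one_iff_mul_comm]
      exact mul_comm g h
    have : τ' = 1 := Subgroup.mem_bot.mp (this hτtop)
    exact hτne (congrArg Subtype.val this)
  · -- inductive step : m ≥ 2
    have hm2 : 2 ≤ m := h2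
    set n := m - 1 with hn
    haveI : Nonempty β := Nat.card_pos_iff.mp (by omega) |>.1
    obtain ⟨a⟩ := ‹Nonempty β›
    -- transitivity of P on β
    haveI : IsPretransitive ↥P β := by
      constructor
      intro x y
      obtain ⟨j, hj⟩ := htrans x y
      refine ⟨τ' ^ j, ?_⟩
      have : ((τ' ^ j : ↥P) : Equiv.Perm β) = τ ^ j := by
        rw [hτ'def]; exact SubmonoidClass.coe_pow _ j
      rw [Subgroup.smul_def, this]
      exact hj
    set S : Subgroup ↥P := stabilizer ↥P a with hS
    have hSindex : S.index = p ^ m := by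
      rw [hS, index_stabilizer_of_transitive, hcard]
    have hmk : p ^ m ∣ p ^ k := by
      rw [← hk, ← hSindex]; exact S.index_dvd_card
    have hmlek : m ≤ k := (Nat.pow_dvd_pow_iff_le_right hp.one_lt).mp hmk
    have hcardS : Nat.card S = p ^ (k - m) := by
      have h1 : Nat.card S * S.index = p ^ k := by rw [S.card_mul_index, hk]
      have h2 : p ^ (k - m) * p ^ m = p ^ k := by
        rw [← pow_add, Nat.sub_add_cancel hmlek]
      rw [hSindex] at h1
      exact Nat.eq_of_mul_eq_mul_right (Nat.pow_pos (n := m) hp.pos) (h1.trans h2.symm)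
    have hdvd' : p ^ (k - n) ∣ Nat.card ↥P := by
      rw [hk]; exact pow_dvd_pow p (Nat.sub_le k n)
    have hle' : k - m ≤ k - n := by omega
    obtain ⟨H, hcardH, hSH⟩ :=
      Sylow.exists_subgroup_card_pow_prime_le (G := ↥P) p (n := k - m) (m := k - n)
        hdvd' S hcardS hle'
    have hHindex : H.index = p ^ n := by
      have h1 : Nat.card H * H.index = p ^ k := by rw [H.card_mul_index, hk]
      have h2 : p ^ (k - n) * p ^ n = p ^ k := by
        rw [← pow_add, Nat.sub_add_cancel (by omega : n ≤ k)]
      rw [hcardH] at h1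
      exact Nat.eq_of_mul_eq_mul_left (Nat.pow_pos hp.pos) (h1.trans h2.symm)
    -- the action of P on the quotient P ⧸ H
    set φ : ↥P →* Equiv.Perm (↥P ⧸ H) := MulAction.toPermHom ↥P (↥P ⧸ H) with hφ
    have hcardQuot : Nat.card (↥P ⧸ H) = p ^ n := by rw [← H.index_eq_card, hHindex]
    -- φ τ' acts transitively
    have htrans' : ∀ X Y : ↥P ⧸ H, ∃ j : ℕ, ((φ τ') ^ j) X = Y := by
      intro X Y
      induction X using QuotientGroup.induction_on with
      | H g₁ =>
      induction Y using QuotientGroup.induction_on with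
      | H g₂ =>
      obtain ⟨j, hj⟩ := htrans ((g₁ : Equiv.Perm β) a) ((g₂ : Equiv.Perm β) a)
      refine ⟨j, ?_⟩
      have hpow : (φ τ') ^ j = φ (τ' ^ j) := (map_pow φ τ' j).symm
      rw [hpow, hφ]
      simp only [MulAction.toPermHom_apply, MulAction.toPerm_apply]
      rw [MulAction.Quotient.smul_mk]
      rw [QuotientGroup.eq]
      apply hSH
      rw [hS, MulAction.mem_stabilizer_iff]
      have hc : ((τ' ^ j : ↥P) : Equiv.Perm β) = τ ^ j := SubmonoidClass.coe_pow _ j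
      rw [Subgroup.smul_def]
      simp only [smul_eq_mul]
      have hco : (((τ' ^ j * g₁)⁻¹ * g₂ : ↥P) : Equiv.Perm β)
          = (g₁ : Equiv.Perm β)⁻¹ * ((τ ^ j)⁻¹ * (g₂ : Equiv.Perm β)) := by
        simp only [MulMemClass.coe_mul, InvMemClass.coe_inv, hc, mul_inv_rev, mul_assoc]
      rw [hco, Equiv.Perm.smul_def]
      simp only [Equiv.Perm.mul_apply]
      rw [← hj]
      simp
    -- the image of P is a p-subgroup of Perm (P ⧸ H)
    have hrange : IsPGroup p φ.range :=
      IsPGroup.of_surjective hPgrp φ.rangeRestrict φ.rangeRestrict_surjective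
    obtain ⟨Q', hQ'⟩ := hrange.exists_le_sylow
    have hτ''mem : φ τ' ∈ Q' := hQ' ⟨τ', rfl⟩
    -- apply the induction hypothesis
    have hIH := ih n (by omega) (by omega) (↥P ⧸ H) inferInstance hcardQuot Q' (φ τ')
      hτ''mem htrans'
    apply hIH
    have h1 : φ τ' ∈ Subgroup.map φ ⁅(⊤ : Subgroup ↥P), (⊤ : Subgroup ↥P)⁆ :=
      Subgroup.mem_map_of_mem φ hτtop
    rw [Subgroup.map_commutator, ← MonoidHom.range_eq_map] at h1
    exact Subgroup.commutator_mono hQ' hQ' h1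

/-- The `q`-cycle `(1 2 … q)` (`q = pˡ`, `l ≥ 1`) is not in the commutator subgroup of a
Sylow `p`-subgroup of the symmetric group on `q` symbols containing it. -/
theorem cycle_not_in_commutator_of_sylow {p l : ℕ} (hp : p.Prime) (hl : 1 ≤ l)
    (q : ℕ) (hq : q = p ^ l) (Q : Sylow p (Equiv.Perm (Fin q)))
    (hmem : finRotate q ∈ Q) :
    finRotate q ∉ ⁅(Q : Subgroup (Equiv.Perm (Fin q))), (Q : Subgroup (Equiv.Perm (Fin q)))⁆ := by
  have hq1 : 1 ≤ q := by
    rw [hq]; exact Nat.one_le_pow _ _ hp.pos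
  obtain ⟨q', rfl⟩ : ∃ q'', q = q'' + 1 := ⟨q - 1, by omega⟩
  exact key hp l hl (Fin (q' + 1)) inferInstance (by simpa using hq) Q (finRotate (q' + 1))
    hmem (fun x y => ⟨(y - x).val, by
      rw [finRotate_pow_apply, Fin.cast_val_eq_self, add_sub_cancel]⟩)
end

section
/- A q-cycle in the symmetric group S_q, where q = p^l is a prime power with l ≥ 1, is not contained in the commutator subgroup of any p-subgroup of S_q that contains it. -/
open Subgroup

/-- The commutator subgroup lies in every normal coatom. -/
lemma commutator_le_coatom_aux {G : Type*} [Group G] {M : Subgroup G} (hn : M.Normal)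
    (hM : IsCoatom M) : commutator G ≤ M := by
  have hcomm : ∀ a b : G ⧸ M, a * b = b * a := by
    intro a b
    by_cases ha : a = 1
    · simp [ha]
    · have htop : Subgroup.zpowers a = ⊤ := by
        set C := Subgroup.comap (QuotientGroup.mk' M) (Subgroup.zpowers a) with hC
        have hMC : M ≤ C := by
          intro m hm
          simp only [hC, Subgroup.mem_comap, QuotientGroup.mk'_apply]
          have : ((m : G) : G ⧸ M) = 1 := (QuotientGroup.eq_one_iff m).mpr hm
          rw [this]; exact one_mem _
        rcases eq_or_lt_of_le hMC with hEq | hLt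
        · exfalso
          have hmap : Subgroup.map (QuotientGroup.mk' M) C = Subgroup.zpowers a :=
            Subgroup.map_comap_eq_self_of_surjective (QuotientGroup.mk'_surjective M) _
          rw [← hEq, QuotientGroup.map_mk'_self] at hmap
          exact ha (Subgroup.mem_bot.mp (hmap ▸ Subgroup.mem_zpowers a))
        · have : C = ⊤ := hM.2 C hLt
          have hmap : Subgroup.map (QuotientGroup.mk' M) C = Subgroup.zpowers a :=
            Subgroup.map_comap_eq_self_of_surjective (QuotientGroup.mk'_surjective M) _
          rw [this] at hmap
          rw [← hmap]
          exact Subgroup.map_top_of_surjective _ (QuotientGroup.mk'_surjective M)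
      have hb : b ∈ Subgroup.zpowers a := htop ▸ Subgroup.mem_top b
      obtain ⟨n, rfl⟩ := hb
      exact ((Commute.refl a).zpow_right n).eq
  rw [commutator_def, Subgroup.commutator_le]
  intro g _ h _
  open scoped commutatorElement in
  have : ((⁅g, h⁆ : G) : G ⧸ M) = 1 := by
    have : ((⁅g, h⁆ : G) : G ⧸ M) = ⁅(g : G ⧸ M), (h : G ⧸ M)⁆ :=
      map_commutatorElement (QuotientGroup.mk' M) g h
    rw [this, commutatorElement_eq_one_iff_mul_comm]
    exact hcomm _ _
  exact (QuotientGroup.eq_one_iff _).mp this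

/-- In a finite nilpotent group, the commutator subgroup lies in the Frattini subgroup. -/
lemma commutator_le_frattini_aux {G : Type*} [Group G] [Finite G]
    (h : Group.IsNilpotent G) : commutator G ≤ frattini G := by
  have hnc : NormalizerCondition G := normalizerCondition_of_isNilpotent
  refine le_iInf₂ fun M hM => ?_
  exact commutator_le_coatom_aux (Subgroup.NormalizerCondition.normal_of_coatom M hnc hM) hM

/-- A `q`-cycle in `S_q`, `q = pˡ` a prime power with `l ≥ 1`, is not contained in the
commutator subgroup of any `p`-subgroup of `S_q` containing it. -/
theorem cycle_not_in_commutator_of_pSubgroup {p l : ℕ} (hp : p.Prime) (hl : 1 ≤ l)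
    (q : ℕ) (hq : q = p ^ l) (σ : Equiv.Perm (Fin q))
    (hcyc : σ.IsCycle) (hsupp : σ.support.card = q)
    (Q : Subgroup (Equiv.Perm (Fin q))) (hQ : IsPGroup p Q) (hmem : σ ∈ Q) :
    σ ∉ ⁅Q, Q⁆ := by
  intro hσ
  have hq0 : 0 < q := by
    rw [hq]; exact pow_pos hp.pos l
  -- every point is moved by σ
  have hmove : ∀ x : Fin q, σ x ≠ x := by
    have huniv : σ.support = Finset.univ := by
      apply Finset.eq_univ_of_card
      rw [hsupp, Fintype.card_fin]
    intro x
    have := huniv ▸ Finset.mem_univ x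
    exact Equiv.Perm.mem_support.mp this
  have x0 : Fin q := ⟨0, hq0⟩
  -- transitivity of σ
  have htrans : ∀ y : Fin q, ∃ i : ℤ, (σ ^ i) x0 = y := fun y =>
    hcyc.exists_zpow_eq (hmove x0) (hmove y)
  -- move to the subgroup Q as a group
  haveI : Fact p.Prime := ⟨hp⟩
  set σ' : Q := ⟨σ, hmem⟩ with hσ'def
  -- σ' is in the commutator subgroup of Q
  have hσ' : σ' ∈ commutator Q := by
    have hcomm : ⁅Q, Q⁆ = Subgroup.map Q.subtype (commutator Q) := by
      rw [commutator_def, Subgroup.map_commutator, ← MonoidHom.range_eq_map,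
        Subgroup.range_subtype]
    rw [hcomm] at hσ
    obtain ⟨s, hs, hss⟩ := hσ
    have : s = σ' := Subtype.ext hss
    exact this ▸ hs
  -- the stabilizer of x0 in Q
  set H : Subgroup Q := MulAction.stabilizer Q x0 with hHdef
  have hsup : H ⊔ commutator Q = ⊤ := by
    rw [eq_top_iff]
    intro g _
    obtain ⟨i, hi⟩ := htrans (g • x0)
    have hpow : (σ' ^ i) • x0 = g • x0 := by
      have : ((σ' ^ i : Q) : Equiv.Perm (Fin q)) = σ ^ i := by
        push_cast; rfl
      show ((σ' ^ i : Q) : Equiv.Perm (Fin q)) x0 = g • x0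
      rw [this, hi]
    have hstab : (σ' ^ i)⁻¹ * g ∈ H := by
      rw [hHdef, MulAction.mem_stabilizer_iff, mul_smul, ← hpow, inv_smul_smul]
    have hpowmem : σ' ^ i ∈ commutator Q := zpow_mem hσ' i
    have : g = (σ' ^ i) * ((σ' ^ i)⁻¹ * g) := by group
    rw [this]
    exact mul_mem (le_sup_right (α := Subgroup Q) hpowmem)
      (le_sup_left (α := Subgroup Q) hstab)
  -- Q is a finite p-group, hence nilpotent
  haveI : Finite Q := Subtype.finite
  have hnil : Group.IsNilpotent Q := hQ.isNilpotent
  have hfr : H ⊔ frattini Q = ⊤ := by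
    rw [eq_top_iff, ← hsup]
    exact sup_le_sup le_rfl (commutator_le_frattini_aux hnil)
  have hH : H = ⊤ := frattini_nongenerating hfr
  -- but σ' moves x0, contradiction
  have : σ' ∈ H := hH ▸ Subgroup.mem_top σ'
  rw [hHdef, MulAction.mem_stabilizer_iff] at this
  exact hmove x0 this
end
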